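/- Let J : ℝ^d × ℝ^{n×p} → ℝ, (θ, Z) ↦ J(θ; Z), be twice continuously differentiable, let θ* : ℝ^{n×p} → ℝ^d be a map differentiable at X with ∇_θ J(θ*(X'); X') = 0 for all X' in a neighborhood of X, and suppose the Hessian H = ∇²_{θθ} J(θ*(X); X) is invertible. Define the target-utility map φ : ℝ^{n×p} → ℝ by φ(X') = J(θ*(X'); X), i.e., the loss of the parameter trained on X' evaluated on the fixed original data X. Then the derivative of φ at the point X' = X equals −L H⁻¹ G, where L = ∇_θ J(θ*(X); X) is the gradient of the loss with respect to the parameter at θ*(X), and G = ∇²_{θX} J(θ*(X); X). -/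

import Mathlib

open scoped Topology

/-!
STATEMENT 3: With J, θ* as in the previous statements (J twice continuously differentiable,
θ* differentiable at X, ∇_θ J(θ*(X'); X') = 0 near X, H = ∇²_{θθ} J(θ*(X); X) invertible
with inverse Hinv, G = ∇²_{θX} J(θ*(X); X)), define the target-utility map
φ(X') = J(θ*(X'); X), the loss of the parameter trained on X' evaluated on the fixed
original data X.  Then Dφ(X) = −L H⁻¹ G, where L = ∇_θ J(θ*(X); X) is the gradient of the
loss w.r.t. the parameter at θ*(X), viewed as a row vector (linear functional) via the
inner product.
-/
theorem statement3 {d n p : ℕ}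
    (J : EuclideanSpace ℝ (Fin d) → EuclideanSpace ℝ (Fin n × Fin p) → ℝ)
    (hJ : ContDiff ℝ 2 (fun q : EuclideanSpace ℝ (Fin d) × EuclideanSpace ℝ (Fin n × Fin p) =>
      J q.1 q.2))
    (θstar : EuclideanSpace ℝ (Fin n × Fin p) → EuclideanSpace ℝ (Fin d))
    (X : EuclideanSpace ℝ (Fin n × Fin p))
    (hθ : DifferentiableAt ℝ θstar X)
    (hstat : ∀ᶠ X' in 𝓝 X, gradient (fun θ => J θ X') (θstar X') = 0)
    (H : EuclideanSpace ℝ (Fin d) →L[ℝ] EuclideanSpace ℝ (Fin d))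
    (hH : H = fderiv ℝ (fun θ => gradient (fun θ' => J θ' X) θ) (θstar X))
    (G : EuclideanSpace ℝ (Fin n × Fin p) →L[ℝ] EuclideanSpace ℝ (Fin d))
    (hG : G = fderiv ℝ (fun X' => gradient (fun θ => J θ X') (θstar X)) X)
    (Hinv : EuclideanSpace ℝ (Fin d) →L[ℝ] EuclideanSpace ℝ (Fin d))
    (hHinv₁ : Hinv.comp H = ContinuousLinearMap.id ℝ _)
    (hHinv₂ : H.comp Hinv = ContinuousLinearMap.id ℝ _)
    (L : EuclideanSpace ℝ (Fin d))
    (hL : L = gradient (fun θ => J θ X) (θstar X)) :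
    fderiv ℝ (fun X' => J (θstar X') X) X =
      -(((InnerProductSpace.toDual ℝ (EuclideanSpace ℝ (Fin d)) L :
          EuclideanSpace ℝ (Fin d) →L[ℝ] ℝ)).comp (Hinv.comp G)) := by
  letI E := EuclideanSpace ℝ (Fin d)
  letI F := EuclideanSpace ℝ (Fin n × Fin p)
  have hJdiff : Differentiable ℝ (fun q : E × F => J q.1 q.2) := hJ.differentiable (by norm_num)
  -- partial fderiv in θ
  have hpart1 : ∀ q : E × F, fderiv ℝ (fun θ => J θ q.2) q.1 =
      (fderiv ℝ (fun q : E × F => J q.1 q.2) q).comp (ContinuousLinearMap.inl ℝ E F) := by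
    intro q
    have h1 : HasFDerivAt (fun θ : E => (θ, q.2)) (ContinuousLinearMap.inl ℝ E F) q.1 :=
      hasFDerivAt_prodMk_left q.1 q.2
    exact ((hJdiff q).hasFDerivAt.comp q.1 h1).fderiv
  set g : E × F → E := fun q => (InnerProductSpace.toDual ℝ E).symm
      ((fderiv ℝ (fun q : E × F => J q.1 q.2) q).comp (ContinuousLinearMap.inl ℝ E F)) with hg
  have hgrad : ∀ q : E × F, gradient (fun θ => J θ q.2) q.1 = g q := by
    intro q
    rw [gradient, hpart1 q]
  have hDdiff : Differentiable ℝ (fderiv ℝ (fun q : E × F => J q.1 q.2)) :=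
    (hJ.fderiv_right (m := 1) (by norm_num)).differentiable (by norm_num)
  have hgdiff : Differentiable ℝ g := by
    intro q
    have h1 : DifferentiableAt ℝ (fun q : E × F =>
        (fderiv ℝ (fun q : E × F => J q.1 q.2) q).comp (ContinuousLinearMap.inl ℝ E F)) q :=
      (hDdiff q).clm_comp (differentiableAt_const _)
    exact ((InnerProductSpace.toDual ℝ E).symm.toContinuousLinearEquiv.differentiableAt).comp q h1
  have hH' : H = (fderiv ℝ g (θstar X, X)).comp (ContinuousLinearMap.inl ℝ E F) := by
    rw [hH]
    have h1 : (fun θ : E => gradient (fun θ' => J θ' X) θ) = fun θ => g (θ, X) := by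
      funext θ; exact hgrad (θ, X)
    rw [h1]
    have h2 : HasFDerivAt (fun θ : E => (θ, X)) (ContinuousLinearMap.inl ℝ E F) (θstar X) :=
      hasFDerivAt_prodMk_left _ _
    exact (HasFDerivAt.comp (f := fun θ : E => (θ, X)) (hf := h2)
      (hg := (hgdiff (θstar X, X)).hasFDerivAt) (θstar X)).fderiv
  have hG' : G = (fderiv ℝ g (θstar X, X)).comp (ContinuousLinearMap.inr ℝ E F) := by
    rw [hG]
    have h1 : (fun X' : F => gradient (fun θ => J θ X') (θstar X)) = fun X' => g (θstar X, X') := by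
      funext X'; exact hgrad (θstar X, X')
    rw [h1]
    have h2 : HasFDerivAt (fun X' : F => (θstar X, X')) (ContinuousLinearMap.inr ℝ E F) X :=
      hasFDerivAt_prodMk_right _ _
    exact (HasFDerivAt.comp (f := fun X' : F => (θstar X, X')) (hf := h2)
      (hg := (hgdiff (θstar X, X)).hasFDerivAt) X).fderiv
  have hFeq : (fun X' : F => g (θstar X', X')) =ᶠ[𝓝 X] fun _ => (0 : E) := by
    filter_upwards [hstat] with X' h
    rw [← hgrad (θstar X', X'), h]
  have hcomp : HasFDerivAt (fun X' : F => g (θstar X', X'))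
      ((fderiv ℝ g (θstar X, X)).comp
        ((fderiv ℝ θstar X).prod (ContinuousLinearMap.id ℝ F))) X := by
    have h1 : HasFDerivAt (fun X' : F => (θstar X', X'))
        ((fderiv ℝ θstar X).prod (ContinuousLinearMap.id ℝ F)) X :=
      hθ.hasFDerivAt.prodMk (hasFDerivAt_id X)
    exact HasFDerivAt.comp (f := fun X' : F => (θstar X', X')) (hf := h1)
      (hg := (hgdiff (θstar X, X)).hasFDerivAt) X
  have hzero : (fderiv ℝ g (θstar X, X)).comp
      ((fderiv ℝ θstar X).prod (ContinuousLinearMap.id ℝ F)) = 0 := by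
    have h1 := hcomp.fderiv
    rw [hFeq.fderiv_eq] at h1
    rw [← h1, fderiv_fun_const]
    rfl
  have hTeq : fderiv ℝ θstar X = -(Hinv.comp G) := by
    ext v
    have h1 : fderiv ℝ g (θstar X, X) (fderiv ℝ θstar X v, v) = 0 := by
      have := congrFun (congrArg DFunLike.coe hzero) v
      simp at this; exact this
    have h2 : (fderiv ℝ θstar X v, v) =
        ((fderiv ℝ θstar X v, 0) : E × F) + ((0 : E), v) := by simp
    have h3 : H (fderiv ℝ θstar X v) + G v = 0 := by
      rw [hH', hG']
      simp only [ContinuousLinearMap.comp_apply, ContinuousLinearMap.inl_apply,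
        ContinuousLinearMap.inr_apply]
      rw [← map_add, show (ContinuousLinearMap.inl ℝ E F) (fderiv ℝ θstar X v) +
        (ContinuousLinearMap.inr ℝ E F) v = (fderiv ℝ θstar X v, v) from by rw [h2]; rfl, h1]
    have h4 : fderiv ℝ θstar X v = Hinv (H (fderiv ℝ θstar X v)) := by
      have := congrFun (congrArg DFunLike.coe hHinv₁) (fderiv ℝ θstar X v)
      simpa using this.symm
    have h5 : H (fderiv ℝ θstar X v) = -(G v) :=
      eq_neg_of_add_eq_zero_left h3
    rw [h4, h5]
    simp
  have hLd : HasFDerivAt (fun θ : E => J θ X)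
      ((InnerProductSpace.toDual ℝ E L : E →L[ℝ] ℝ)) (θstar X) := by
    have h2 : HasFDerivAt (fun θ : E => (θ, X)) (ContinuousLinearMap.inl ℝ E F) (θstar X) :=
      hasFDerivAt_prodMk_left _ _
    have h3 : HasFDerivAt (fun θ : E => J θ X)
        ((fderiv ℝ (fun q : E × F => J q.1 q.2) (θstar X, X)).comp
          (ContinuousLinearMap.inl ℝ E F)) (θstar X) :=
      HasFDerivAt.comp (f := fun θ : E => (θ, X)) (hf := h2)
        (hg := (hJdiff (θstar X, X)).hasFDerivAt) (θstar X)
    have h1 : (InnerProductSpace.toDual ℝ E L : E →L[ℝ] ℝ) =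
        (fderiv ℝ (fun q : E × F => J q.1 q.2) (θstar X, X)).comp
          (ContinuousLinearMap.inl ℝ E F) := by
      rw [hL, gradient, ← hpart1 (θstar X, X)]
      simp
      exact (InnerProductSpace.toDual ℝ E).apply_symm_apply _
    rw [h1]; exact h3
  have hfinal : HasFDerivAt (fun X' : F => J (θstar X') X)
      (((InnerProductSpace.toDual ℝ E L : E →L[ℝ] ℝ)).comp (fderiv ℝ θstar X)) X :=
    hLd.comp X hθ.hasFDerivAt
  rw [hfinal.fderiv, hTeq]
  ext v
  simp only [ContinuousLinearMap.coe_comp', Function.comp_apply, ContinuousLinearMap.neg_apply,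
    InnerProductSpace.toDual_apply_apply, ContinuousLinearMap.comp_apply]
  rw [PiLp.inner_apply]
  simp [RCLike.inner_apply, conj_trivial, PiLp.inner_apply, mul_comm]
  rw [← Finset.sum_neg_distrib]
  refine Finset.sum_congr rfl fun i _ => ?_
  rw [show (-Hinv (G v)).ofLp i = -(Hinv (G v)).ofLp i from rfl]
  ring
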